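/- Consider the mean-payoff parity game with three vertices a, m, r; priorities π(a) = 1, π(m) = π(r) = 0; edges (m, a) with cost 1, (a, m) with cost 0, (m, r) with cost −1, and (r, m) with cost 0; where the vertex m is owned by Con (the vertices a and r each have a unique outgoing edge, so their ownership is irrelevant). Then Con has a winning strategy from m, but no positional strategy for Con is winning from m. -/

import Mathlib

/-- A mean-payoff parity game on a vertex type `V`: a directed graph in which
every vertex has at least one outgoing edge, a partition of the vertices into
those owned by player Dis (`disOwns v`) and those owned by player Con,
a priority function and an integer cost function on edges. -/
structure MPPGame (V : Type) where
  edge : V → V → Prop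
  disOwns : V → Prop
  pri : V → ℕ
  cost : V → V → ℤ
  exists_succ : ∀ v, ∃ u, edge v u

/-- `A`, `B`, `C` partition `W`. -/
def Partition3 {V : Type} (W A B C : Set V) : Prop :=
  A ∪ B ∪ C = W ∧ Disjoint A B ∧ Disjoint A C ∧ Disjoint B C

/-- Lexicographic order on finite sequences, in which a proper prefix is
smaller than any of its proper extensions. -/
def seqLt {M : Type} (lt : M → M → Prop) : List M → List M → Prop :=
  List.Lex lt

/-- The `p`-truncation of a sequence `⟨m_{d-1}, m_{d-3}, …, m_ℓ⟩` (indexed by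
odd numbers from `d-1` downwards): keep only the components `m_i` with `i ≥ p`. -/
def trunc {M : Type} (d p : ℕ) (s : List M) : List M :=
  s.take ((d + 1 - p) / 2)

/-- The order on finite binary strings: `0s < ε`, `ε < 1s`, and
`bs < bs'` iff `s < s'`. -/
def binLt : List Bool → List Bool → Prop
  | [], [] => False
  | false :: _, [] => True
  | true :: _, [] => False
  | [], false :: _ => False
  | [], true :: _ => True
  | a :: s, b :: t => (a = false ∧ b = true) ∨ (a = b ∧ binLt s t)

/-- Membership in `S_{n,d}`: sequences `⟨m_{d-1}, …, m_ℓ⟩` of binary strings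
with `ℓ` odd, `1 ≤ ℓ ≤ d+1` (equivalently `2·len ≤ d`) and total length at
most `⌈log₂ n⌉`. -/
def inSnd (n d : ℕ) (s : List (List Bool)) : Prop :=
  2 * s.length ≤ d ∧ (s.map List.length).sum ≤ Nat.clog 2 n

namespace MPPGame

variable {V : Type}

/-- An infinite play: each consecutive pair is an edge. -/
def Play (G : MPPGame V) (p : ℕ → V) : Prop :=
  ∀ i, G.edge (p i) (p (i + 1))

/-- An infinite play that stays in the subgame induced by `W`. -/
def PlayIn (G : MPPGame V) (W : Set V) (p : ℕ → V) : Prop :=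
  (∀ i, p i ∈ W) ∧ ∀ i, G.edge (p i) (p (i + 1))

/-- The mean payoff of a play: the limit superior of the averages of the
partial sums of the edge costs. -/
noncomputable def meanPayoff (G : MPPGame V) (p : ℕ → V) : ℝ :=
  Filter.limsup
    (fun N => (∑ i ∈ Finset.range N, (G.cost (p i) (p (i + 1)) : ℝ)) / (N : ℝ))
    Filter.atTop

/-- Priority `k` occurs infinitely often along the play `p`. -/
def InfOften (G : MPPGame V) (p : ℕ → V) (k : ℕ) : Prop :=
  ∀ N, ∃ i, N ≤ i ∧ G.pri (p i) = k

/-- A play is winning for Con if the highest priority occurring infinitely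
often is odd and the mean payoff is negative. -/
def ConWinsPlay (G : MPPGame V) (p : ℕ → V) : Prop :=
  (∃ k, Odd k ∧ G.InfOften p k ∧ ∀ j, G.InfOften p j → j ≤ k) ∧
    G.meanPayoff p < 0

/-- A play is winning for Dis iff it is not winning for Con. -/
def DisWinsPlay (G : MPPGame V) (p : ℕ → V) : Prop :=
  ¬ G.ConWinsPlay p

/-- A (history-dependent) strategy for Dis: given the list of previously
visited vertices and the current vertex (owned by Dis), it picks a successor
along an edge. -/
def DisStrategy (G : MPPGame V) (σ : List V → V → V) : Prop :=
  ∀ h v, G.disOwns v → G.edge v (σ h v)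

/-- A (history-dependent) strategy for Con. -/
def ConStrategy (G : MPPGame V) (σ : List V → V → V) : Prop :=
  ∀ h v, ¬ G.disOwns v → G.edge v (σ h v)

/-- A play is consistent with a strategy `σ` of Dis. -/
def ConsistentDis (G : MPPGame V) (σ : List V → V → V) (p : ℕ → V) : Prop :=
  ∀ i, G.disOwns (p i) → p (i + 1) = σ ((List.range i).map p) (p i)

/-- A play is consistent with a strategy `σ` of Con. -/
def ConsistentCon (G : MPPGame V) (σ : List V → V → V) (p : ℕ → V) : Prop :=
  ∀ i, ¬ G.disOwns (p i) → p (i + 1) = σ ((List.range i).map p) (p i)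

/-- A positional strategy for Dis. -/
def PosDisStrategy (G : MPPGame V) (σ : V → V) : Prop :=
  ∀ v, G.disOwns v → G.edge v (σ v)

/-- A positional strategy for Con. -/
def PosConStrategy (G : MPPGame V) (σ : V → V) : Prop :=
  ∀ v, ¬ G.disOwns v → G.edge v (σ v)

/-- A play is consistent with a positional strategy `σ` of Dis. -/
def ConsistentDisPos (G : MPPGame V) (σ : V → V) (p : ℕ → V) : Prop :=
  ∀ i, G.disOwns (p i) → p (i + 1) = σ (p i)

/-- A play is consistent with a positional strategy `σ` of Con. -/
def ConsistentConPos (G : MPPGame V) (σ : V → V) (p : ℕ → V) : Prop :=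
  ∀ i, ¬ G.disOwns (p i) → p (i + 1) = σ (p i)

/-- The strategy `σ` of Dis is winning for Dis from `v`. -/
def DisWinsFrom (G : MPPGame V) (σ : List V → V → V) (v : V) : Prop :=
  ∀ p, G.Play p → p 0 = v → G.ConsistentDis σ p → G.DisWinsPlay p

/-- The strategy `σ` of Con is winning for Con from `v`. -/
def ConWinsFrom (G : MPPGame V) (σ : List V → V → V) (v : V) : Prop :=
  ∀ p, G.Play p → p 0 = v → G.ConsistentCon σ p → G.ConWinsPlay p

/-- The positional strategy `σ` of Dis is winning for Dis from `v`. -/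
def DisWinsFromPos (G : MPPGame V) (σ : V → V) (v : V) : Prop :=
  ∀ p, G.Play p → p 0 = v → G.ConsistentDisPos σ p → G.DisWinsPlay p

/-- The positional strategy `σ` of Con is winning for Con from `v`. -/
def ConWinsFromPos (G : MPPGame V) (σ : V → V) (v : V) : Prop :=
  ∀ p, G.Play p → p 0 = v → G.ConsistentConPos σ p → G.ConWinsPlay p

/-- `W` is a trap for Con: every Con vertex of `W` has all its outgoing edges
into `W`, and every Dis vertex of `W` has at least one outgoing edge into `W`. -/
def TrapForCon (G : MPPGame V) (W : Set V) : Prop :=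
  ∀ v ∈ W, (¬ G.disOwns v → ∀ u, G.edge v u → u ∈ W) ∧
    (G.disOwns v → ∃ u ∈ W, G.edge v u)

/-- `W` is a trap for Dis. -/
def TrapForDis (G : MPPGame V) (W : Set V) : Prop :=
  ∀ v ∈ W, (G.disOwns v → ∀ u, G.edge v u → u ∈ W) ∧
    (¬ G.disOwns v → ∃ u ∈ W, G.edge v u)

/-- `R` is a trap for Con inside the subgame induced by `W` (only edges
within `W` count for Con). -/
def TrapForConIn (G : MPPGame V) (W R : Set V) : Prop :=
  ∀ v ∈ R, (¬ G.disOwns v → ∀ u ∈ W, G.edge v u → u ∈ R) ∧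
    (G.disOwns v → ∃ u ∈ R, G.edge v u)

/-- `R` is a trap for Dis inside the subgame induced by `W`. -/
def TrapForDisIn (G : MPPGame V) (W R : Set V) : Prop :=
  ∀ v ∈ R, (G.disOwns v → ∀ u ∈ W, G.edge v u → u ∈ R) ∧
    (¬ G.disOwns v → ∃ u ∈ R, G.edge v u)

/-- `W` induces a subgame: it is nonempty and every vertex of `W` has an
outgoing edge within `W`. -/
def IsSubgame (G : MPPGame V) (W : Set V) : Prop :=
  W.Nonempty ∧ ∀ v ∈ W, ∃ u ∈ W, G.edge v u

/-- `τ` is a positional reachability strategy for Dis from `T` to `B` in the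
subgame `W`: it is a legal positional strategy within `W`, and every
consistent play in `W` starting in `T` reaches `B`. -/
def DisReach (G : MPPGame V) (W T B : Set V) (τ : V → V) : Prop :=
  (∀ v ∈ W, G.disOwns v → G.edge v (τ v) ∧ τ v ∈ W) ∧
    ∀ p, G.PlayIn W p → p 0 ∈ T → G.ConsistentDisPos τ p → ∃ i, p i ∈ B

/-- `τ` is a positional reachability strategy for Con from `T` to `B` in `W`. -/
def ConReach (G : MPPGame V) (W T B : Set V) (τ : V → V) : Prop :=
  (∀ v ∈ W, ¬ G.disOwns v → G.edge v (τ v) ∧ τ v ∈ W) ∧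
    ∀ p, G.PlayIn W p → p 0 ∈ T → G.ConsistentConPos τ p → ∃ i, p i ∈ B

/-- `σ` is a positional strategy for Dis that is mean-payoff winning for Dis on
`R`: every consistent play in `R` has limsup average cost `≥ 0`. -/
def DisMPWin (G : MPPGame V) (R : Set V) (σ : V → V) : Prop :=
  (∀ v ∈ R, G.disOwns v → G.edge v (σ v) ∧ σ v ∈ R) ∧
    ∀ p, G.PlayIn R p → G.ConsistentDisPos σ p → 0 ≤ G.meanPayoff p

/-- `σ` is a positional strategy for Con that is mean-payoff winning for Con on
`R`: every consistent play in `R` has limsup average cost `< 0`. -/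
def ConMPWin (G : MPPGame V) (R : Set V) (σ : V → V) : Prop :=
  (∀ v ∈ R, ¬ G.disOwns v → G.edge v (σ v) ∧ σ v ∈ R) ∧
    ∀ p, G.PlayIn R p → G.ConsistentConPos σ p → G.meanPayoff p < 0

/-- `DisDecomp G b W` : the subgame `W`, whose highest priority is `b`, has a
`b`-decomposition for Dis.  (The disjunctions in the textbook definition are
split into separate constructors, and "`X` is empty or recursively has a
decomposition" is encoded as `X.Nonempty → DisDecomp G _ X`.) -/
inductive DisDecomp (G : MPPGame V) : ℕ → Set V → Prop where
  | even (b b' : ℕ) (W R T B : Set V) (τ : V → V)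
      (hb : Even b) (hsub : G.IsSubgame W)
      (hpart : Partition3 W R T B)
      (hB : B = {v | v ∈ W ∧ G.pri v = b}) (hBne : B.Nonempty)
      (htop : ∀ v ∈ W, G.pri v ≤ b)
      (hreach : G.DisReach W T B τ)
      (hb' : R.Nonempty → b' < b)
      (hR : R.Nonempty → DisDecomp G b' R) :
      DisDecomp G b W
  | oddRec (b b' b'' : ℕ) (W U T R : Set V) (τ : V → V)
      (hb : Odd b) (hsub : G.IsSubgame W)
      (hpart : Partition3 W U T R)
      (htop : ∀ v ∈ W, G.pri v ≤ b) (htop' : ∃ v ∈ W, G.pri v = b)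
      (hRne : R.Nonempty) (htrap : G.TrapForConIn W R)
      (hb1 : b' < b) (hR : DisDecomp G b' R)
      (hreach : G.DisReach W T R τ)
      (hb2 : U.Nonempty → b'' ≤ b)
      (hU : U.Nonempty → DisDecomp G b'' U) :
      DisDecomp G b W
  | oddMP (b b'' : ℕ) (W U T R : Set V) (τ σ : V → V)
      (hb : Odd b) (hsub : G.IsSubgame W)
      (hpart : Partition3 W U T R)
      (htop : ∀ v ∈ W, G.pri v ≤ b) (htop' : ∃ v ∈ W, G.pri v = b)
      (hRne : R.Nonempty) (htrap : G.TrapForConIn W R)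
      (hsig : G.DisMPWin R σ)
      (hreach : G.DisReach W T R τ)
      (hb2 : U.Nonempty → b'' ≤ b)
      (hU : U.Nonempty → DisDecomp G b'' U) :
      DisDecomp G b W

/-- `ConDecomp G b W` : the subgame `W`, whose highest priority is `b`, has a
`b`-decomposition for Con.  ("`X` is empty or recursively has a decomposition"
is encoded as `X.Nonempty → ConDecomp G _ X`.) -/
inductive ConDecomp (G : MPPGame V) : ℕ → Set V → Prop where
  | odd (b b' : ℕ) (W R T B : Set V) (τ lam : V → V)
      (hb : Odd b) (hsub : G.IsSubgame W)
      (hpart : Partition3 W R T B)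
      (hB : B = {v | v ∈ W ∧ G.pri v = b}) (hBne : B.Nonempty)
      (htop : ∀ v ∈ W, G.pri v ≤ b)
      (hreach : G.ConReach W T B τ)
      (hb' : R.Nonempty → b' < b)
      (hR : R.Nonempty → ConDecomp G b' R)
      (hlam : G.ConMPWin W lam) :
      ConDecomp G b W
  | even (b b' b'' : ℕ) (W U T R : Set V) (τ : V → V)
      (hb : Even b) (hsub : G.IsSubgame W)
      (hpart : Partition3 W U T R)
      (htop : ∀ v ∈ W, G.pri v ≤ b) (htop' : ∃ v ∈ W, G.pri v = b)
      (hRne : R.Nonempty) (htrap : G.TrapForDisIn W R)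
      (hb1 : b' < b) (hR : ConDecomp G b' R)
      (hreach : G.ConReach W T R τ)
      (hb2 : U.Nonempty → b'' ≤ b)
      (hU : U.Nonempty → ConDecomp G b'' U) :
      ConDecomp G b W

/-- The maximum absolute value of the cost of an edge of the subgame induced
by `W` (and `0` if there is none). -/
noncomputable def maxCostOn (G : MPPGame V) (W : Set V) : ℕ :=
  sSup {n : ℕ | ∃ v ∈ W, ∃ u ∈ W, G.edge v u ∧ n = (G.cost v u).natAbs}

/-- The edge `(v, u)` is progressive in the progress labelling `(μ, φ)`
(with priorities bounded by the even number `d`, over an ordered set with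
strict order `lt`). -/
def Progressive {M : Type} (G : MPPGame V) (d : ℕ) (lt : M → M → Prop)
    (μ : V → List M) (φ : V → WithTop ℤ) (v u : V) : Prop :=
  seqLt lt (trunc d (G.pri v) (μ u)) (μ v) ∨
  (trunc d (G.pri v) (μ u) = μ v ∧ Even (G.pri v) ∧ φ v = ⊤) ∨
  (μ u = μ v ∧ φ v ≠ ⊤ ∧ φ u ≤ φ v + (G.cost v u : WithTop ℤ))

/-- `(μ, φ)` is a progress labelling on the subgame induced by `W`:
`μ v` represents the sequence `⟨m_{d-1}, m_{d-3}, …, m_ℓ⟩` (so that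
`d + 1 = 2·(μ v).length + ℓ` with `ℓ` odd and `ℓ ≥ π(v)`);
if `φ v = ∞` then `ℓ` is the least odd integer `≥ π(v)`; and if `φ v ≠ ∞`
then `0 ≤ φ v ≤ n·C`, where `n` is the number of vertices of the subgame and
`C` the maximum absolute value of an edge cost of the subgame. -/
def IsProgressLabellingOn {M : Type} (G : MPPGame V) (W : Set V) (d : ℕ)
    (μ : V → List M) (φ : V → WithTop ℤ) : Prop :=
  ∀ v ∈ W,
    (∃ l, Odd l ∧ G.pri v ≤ l ∧ d + 1 = 2 * (μ v).length + l) ∧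
    (φ v = ⊤ → d + 1 ≤ 2 * (μ v).length + G.pri v + 1) ∧
    (φ v ≠ ⊤ → 0 ≤ φ v ∧
      φ v ≤ (((W.ncard * G.maxCostOn W : ℕ) : ℤ) : WithTop ℤ))

/-- `(μ, φ)` is a progress measure on the subgame induced by `W`: a progress
labelling such that every Dis vertex has a progressive outgoing edge in the
subgame, and every outgoing edge of a Con vertex in the subgame is progressive. -/
def IsProgressMeasureOn {M : Type} (G : MPPGame V) (W : Set V) (d : ℕ)
    (lt : M → M → Prop) (μ : V → List M) (φ : V → WithTop ℤ) : Prop :=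
  G.IsProgressLabellingOn W d μ φ ∧
  (∀ v ∈ W, G.disOwns v → ∃ u ∈ W, G.edge v u ∧ G.Progressive d lt μ φ v u) ∧
  (∀ v ∈ W, ¬ G.disOwns v → ∀ u ∈ W, G.edge v u → G.Progressive d lt μ φ v u)

end MPPGame

/-- The three-vertex example game: vertices `a = 0`, `m = 1`, `r = 2`;
priorities `π a = 1`, `π m = π r = 0`; edges `(m, a)` with cost `1`,
`(a, m)` with cost `0`, `(m, r)` with cost `-1`, `(r, m)` with cost `0`;
the middle vertex `m` is owned by Con (the other two vertices have unique
outgoing edges, so their ownership is irrelevant; here they are owned by Dis). -/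
def exampleGame : MPPGame (Fin 3) where
  edge v u := (v = 0 ∧ u = 1) ∨ (v = 1 ∧ u = 0) ∨ (v = 1 ∧ u = 2) ∨ (v = 2 ∧ u = 1)
  disOwns v := v ≠ 1
  pri v := if v = 0 then 1 else 0
  cost v u := if v = 1 ∧ u = 0 then 1 else if v = 1 ∧ u = 2 then -1 else 0
  exists_succ := by decide

namespace ExampleGameProof

open MPPGame Filter

/-- Sum of edge costs along a finite list of vertices. -/
def listSum : List (Fin 3) → ℤ
  | [] => 0
  | [_] => 0
  | x :: y :: t => exampleGame.cost x y + listSum (y :: t)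

lemma listSum_append_pair (l : List (Fin 3)) (x y : Fin 3) :
    listSum (l ++ [x, y]) = listSum (l ++ [x]) + exampleGame.cost x y := by
  induction l with
  | nil => simp [listSum]
  | cons a l ih =>
    cases l with
    | nil =>
      show exampleGame.cost a x + listSum [x, y] = exampleGame.cost a x + listSum [x] + _
      simp [listSum]
    | cons b t =>
      show exampleGame.cost a b + listSum ((b :: t) ++ [x, y]) =
        exampleGame.cost a b + listSum ((b :: t) ++ [x]) + exampleGame.cost x y
      rw [ih]; ring

/-- Partial sum of costs along a play. -/
def S (p : ℕ → Fin 3) (N : ℕ) : ℤ :=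
  ∑ i ∈ Finset.range N, exampleGame.cost (p i) (p (i + 1))

lemma S_succ (p : ℕ → Fin 3) (N : ℕ) :
    S p (N + 1) = S p N + exampleGame.cost (p N) (p (N + 1)) :=
  Finset.sum_range_succ _ _

lemma listSum_range (p : ℕ → Fin 3) : ∀ i, listSum ((List.range (i + 1)).map p) = S p i := by
  intro i
  induction i with
  | zero => simp [listSum, S]
  | succ i ih =>
    have h2 : List.range (i + 2) = List.range (i + 1) ++ [i + 1] := by simp [List.range_succ]
    have h1 : List.range (i + 1) = List.range i ++ [i] := List.range_succ
    rw [h2, h1, List.map_append, List.map_append, List.map_singleton, List.map_singleton,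
      List.append_assoc]
    show listSum ((List.range i).map p ++ [p i, p (i + 1)]) = S p (i + 1)
    rw [listSum_append_pair, ← List.map_singleton (f := p), ← List.map_append, ← h1, ih, S_succ]

/-- Con's (history-dependent) winning strategy: at `m`, go to `a` if the costs
accumulated so far are sufficiently negative, else go to `r`. -/
def conStrat (h : List (Fin 3)) (v : Fin 3) : Fin 3 :=
  if v = 1 then (if 4 * listSum (h ++ [v]) + (h.length : ℤ) ≤ 0 then 0 else 2) else 1

lemma edge_from_one {u : Fin 3} (h : exampleGame.edge 1 u) : u = 0 ∨ u = 2 := by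
  simp only [exampleGame] at h
  fin_cases u <;> simp_all

lemma edge_from_not_one {v u : Fin 3} (hv : v ≠ 1) (h : exampleGame.edge v u) : u = 1 := by
  simp only [exampleGame] at h
  tauto

lemma not_disOwns_one : ¬ exampleGame.disOwns 1 := by
  simp [exampleGame]

lemma cost_le_one : ∀ v u : Fin 3, exampleGame.cost v u ≤ 1 := by decide

lemma neg_one_le_cost : ∀ v u : Fin 3, (-1 : ℤ) ≤ exampleGame.cost v u := by decide

lemma pri_le_one : ∀ v : Fin 3, exampleGame.pri v ≤ 1 := by decide

lemma edge01 : exampleGame.edge 0 1 := Or.inl ⟨rfl, rfl⟩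
lemma edge10 : exampleGame.edge 1 0 := Or.inr (Or.inl ⟨rfl, rfl⟩)
lemma edge12 : exampleGame.edge 1 2 := Or.inr (Or.inr (Or.inl ⟨rfl, rfl⟩))
lemma edge21 : exampleGame.edge 2 1 := Or.inr (Or.inr (Or.inr ⟨rfl, rfl⟩))

lemma cost10 : exampleGame.cost 1 0 = 1 := by decide
lemma cost01 : exampleGame.cost 0 1 = 0 := by decide
lemma cost12 : exampleGame.cost 1 2 = -1 := by decide
lemma cost21 : exampleGame.cost 2 1 = 0 := by decide

section ConPlay

variable {p : ℕ → Fin 3} (hp : exampleGame.Play p) (h0 : p 0 = 1)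
  (hc : exampleGame.ConsistentCon conStrat p)

include hc in
lemma step1 (k : ℕ) (hk : p (2 * k) = 1) :
    p (2 * k + 1) = if 4 * S p (2 * k) + 2 * (k : ℤ) ≤ 0 then (0 : Fin 3) else 2 := by
  have hnd : ¬ exampleGame.disOwns (p (2 * k)) := by rw [hk]; exact not_disOwns_one
  have := hc (2 * k) hnd
  rw [this, hk]
  have hlist : (List.range (2 * k)).map p ++ [(1 : Fin 3)] = (List.range (2 * k + 1)).map p := by
    rw [List.range_succ, List.map_append, List.map_singleton, hk]
  have hlen : (((List.range (2 * k)).map p).length : ℤ) = 2 * (k : ℤ) := by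
    simp
  simp only [conStrat, hlist, listSum_range, hlen]
  norm_num

include hp h0 hc in
lemma p_even : ∀ k, p (2 * k) = 1 := by
  intro k
  induction k with
  | zero => simpa using h0
  | succ k ih =>
    have h1 := step1 hc k ih
    have hne : p (2 * k + 1) ≠ 1 := by
      split at h1 <;> rw [h1] <;> decide
    have := edge_from_not_one hne (hp (2 * k + 1))
    have harith : 2 * (k + 1) = 2 * k + 1 + 1 := by ring
    rw [harith]; exact this

include hp h0 hc in
lemma S_even_succ (k : ℕ) :
    S p (2 * k + 2) = S p (2 * k) + (if 4 * S p (2 * k) + 2 * (k : ℤ) ≤ 0 then 1 else -1) := by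
  have hk := p_even hp h0 hc k
  have hk1 := p_even hp h0 hc (k + 1)
  have hk1' : p (2 * k + 2) = 1 := by rw [show 2 * k + 2 = 2 * (k + 1) by ring]; exact hk1
  have h1 := step1 hc k hk
  rw [show 2 * k + 2 = (2 * k + 1) + 1 by ring, S_succ, S_succ, hk, hk1', h1]
  split
  · rw [cost10, cost01]; ring
  · rw [cost12, cost21]; ring

include hp h0 hc in
lemma S_bound_even : ∀ k, 4 * S p (2 * k) ≤ 8 - 2 * (k : ℤ) := by
  intro k
  induction k with
  | zero => simp [S]
  | succ k ih =>
    have hs := S_even_succ hp h0 hc k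
    rw [show 2 * (k + 1) = 2 * k + 2 by ring, hs]
    set a := S p (2 * k) with ha
    by_cases hD : 4 * a + 2 * (k : ℤ) ≤ 0
    · rw [if_pos hD]; push_cast; omega
    · rw [if_neg hD]; push_cast; omega

include hp h0 hc in
lemma S_bound_all : ∀ N, 4 * S p N + (N : ℤ) ≤ 13 := by
  intro N
  rcases Nat.even_or_odd N with ⟨k, hk⟩ | ⟨k, hk⟩
  · subst hk
    rw [show k + k = 2 * k from (two_mul k).symm]
    have := S_bound_even hp h0 hc k
    push_cast; omega
  · subst hk
    have h1 := S_bound_even hp h0 hc k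
    have h2 : S p (2 * k + 1) = S p (2 * k) + exampleGame.cost (p (2 * k)) (p (2 * k + 1)) :=
      S_succ p (2 * k)
    have h3 := cost_le_one (p (2 * k)) (p (2 * k + 1))
    push_cast; omega

lemma S_lower (p : ℕ → Fin 3) : ∀ N : ℕ, -(N : ℤ) ≤ S p N := by
  intro N
  have : ∀ i ∈ Finset.range N, (-1 : ℤ) ≤ exampleGame.cost (p i) (p (i + 1)) :=
    fun i _ => neg_one_le_cost _ _
  calc -(N : ℤ) = ∑ _i ∈ Finset.range N, (-1 : ℤ) := by simp
    _ ≤ S p N := Finset.sum_le_sum this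

include hp h0 hc in
lemma visits_a : ∀ N, ∃ k, N ≤ k ∧ p (2 * k + 1) = 0 := by
  intro N
  by_contra hcon
  push_neg at hcon
  have hnD : ∀ k, N ≤ k → ¬ (4 * S p (2 * k) + 2 * (k : ℤ) ≤ 0) := by
    intro k hk hD
    have h1 := step1 hc k (p_even hp h0 hc k)
    rw [if_pos hD] at h1
    exact hcon k hk h1
  have hdec : ∀ j, S p (2 * (N + j)) = S p (2 * N) - j := by
    intro j
    induction j with
    | zero => simp
    | succ j ih =>
      have hs := S_even_succ hp h0 hc (N + j)
      rw [if_neg (hnD (N + j) (Nat.le_add_right _ _))] at hs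
      rw [show 2 * (N + (j + 1)) = 2 * (N + j) + 2 by ring, hs, ih]
      push_cast; ring
  set t : ℤ := 4 * S p (2 * N) + 2 * (N : ℤ) with ht
  have htpos : 0 < t := lt_of_not_ge (hnD N le_rfl)
  set j : ℕ := t.toNat with hj
  have := hnD (N + j) (Nat.le_add_right _ _)
  have hSj := hdec j
  apply this
  rw [hSj]
  push_cast
  omega

end ConPlay

end ExampleGameProof

/-- In the example game, Con has a winning strategy from the
middle vertex `m = 1`, but no positional strategy for Con is winning from it. -/
theorem example_game_con_wins_but_not_positionally :
    (∃ σ : List (Fin 3) → Fin 3 → Fin 3,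
      exampleGame.ConStrategy σ ∧ exampleGame.ConWinsFrom σ 1) ∧
    ¬ ∃ σ : Fin 3 → Fin 3,
      exampleGame.PosConStrategy σ ∧ exampleGame.ConWinsFromPos σ 1 := by
  open ExampleGameProof in
  constructor
  · refine ⟨conStrat, ?_, ?_⟩
    · -- conStrat is a legal strategy for Con
      intro h v hv
      have hv1 : v = 1 := not_not.mp hv
      subst hv1
      by_cases hco : 4 * listSum (h ++ [1]) + (h.length : ℤ) ≤ 0
      · have h1 : conStrat h 1 = 0 := by simp [conStrat, hco]
        rw [h1]; exact edge10
      · have h1 : conStrat h 1 = 2 := by simp [conStrat, hco]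
        rw [h1]; exact edge12
    · -- conStrat wins from m
      intro p hplay hp0 hcons
      have hkey : ∀ N, (∑ i ∈ Finset.range N, (exampleGame.cost (p i) (p (i + 1)) : ℝ))
          = ((S p N : ℤ) : ℝ) := by
        intro N; rw [S]; push_cast; ring
      refine ⟨⟨1, ⟨0, by norm_num⟩, ?_, ?_⟩, ?_⟩
      · -- priority 1 occurs infinitely often
        intro N
        obtain ⟨k, hk, hk0⟩ := visits_a hplay hp0 hcons N
        exact ⟨2 * k + 1, by omega, by rw [hk0]; decide⟩
      · -- every priority occurring infinitely often is ≤ 1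
        intro j hj
        obtain ⟨i, -, hi⟩ := hj 0
        rw [← hi]; exact pri_le_one _
      · -- the mean payoff is negative
        have hcob : Filter.IsCoboundedUnder (· ≤ ·) Filter.atTop
            (fun N : ℕ => (∑ i ∈ Finset.range N, (exampleGame.cost (p i) (p (i + 1)) : ℝ)) / N) := by
          apply Filter.isCoboundedUnder_le_of_eventually_le Filter.atTop (x := -1)
          filter_upwards [Filter.eventually_ge_atTop 1] with N hN
          have h1 := S_lower p N
          have hN' : (0 : ℝ) < N := by exact_mod_cast Nat.lt_of_lt_of_le Nat.zero_lt_one hN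
          rw [hkey, le_div_iff₀ hN']
          have h1' : -(N : ℝ) ≤ ((S p N : ℤ) : ℝ) := by exact_mod_cast h1
          linarith
        have hle : exampleGame.meanPayoff p ≤ -(1/8 : ℝ) := by
          rw [MPPGame.meanPayoff]
          apply Filter.limsup_le_of_le hcob
          filter_upwards [Filter.eventually_ge_atTop 26] with N hN
          have hb := S_bound_all hplay hp0 hcons N
          have hN' : (0 : ℝ) < N := by
            exact_mod_cast Nat.lt_of_lt_of_le (by norm_num) hN
          rw [hkey, div_le_iff₀ hN']
          have hb' : 4 * ((S p N : ℤ) : ℝ) + (N : ℝ) ≤ 13 := by exact_mod_cast hb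
          have hN26 : (26 : ℝ) ≤ N := by exact_mod_cast hN
          linarith
        calc exampleGame.meanPayoff p ≤ -(1/8 : ℝ) := hle
          _ < 0 := by norm_num
  · -- no positional strategy wins for Con
    rintro ⟨σ, hσ, hwin⟩
    have hedge : exampleGame.edge 1 (σ 1) := hσ 1 not_disOwns_one
    rcases edge_from_one hedge with h | h
    · -- σ moves to a : the play alternates m, a with nonnegative mean payoff
      set p : ℕ → Fin 3 := fun i => if i % 2 = 0 then 1 else 0 with hpdef
      have hpe : ∀ i, i % 2 = 0 → p i = 1 := fun i hi => by simp [hpdef, hi]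
      have hpo : ∀ i, i % 2 ≠ 0 → p i = 0 := fun i hi => by simp [hpdef, hi]
      have hplay : exampleGame.Play p := by
        intro i
        by_cases hi : i % 2 = 0
        · rw [hpe i hi, hpo (i + 1) (by omega)]; exact edge10
        · rw [hpo i hi, hpe (i + 1) (by omega)]; exact edge01
      have hcons : exampleGame.ConsistentConPos σ p := by
        intro i hdi
        have hp1 : p i = 1 := not_not.mp hdi
        have hi : i % 2 = 0 := by
          by_contra hi
          rw [hpo i hi] at hp1
          exact absurd hp1 (by decide)
        rw [hp1, h, hpo (i + 1) (by omega)]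
      obtain ⟨-, hmp⟩ := hwin p hplay (hpe 0 rfl) hcons
      have hterm : ∀ i, (0 : ℝ) ≤ (exampleGame.cost (p i) (p (i + 1)) : ℝ) := by
        intro i
        by_cases hi : i % 2 = 0
        · rw [hpe i hi, hpo (i + 1) (by omega)]; norm_num [cost10]
        · rw [hpo i hi, hpe (i + 1) (by omega)]; norm_num [cost01]
      have hge : (0 : ℝ) ≤ exampleGame.meanPayoff p := by
        rw [MPPGame.meanPayoff]
        apply Filter.le_limsup_of_frequently_le
        · apply Filter.Frequently.of_forall
          intro N
          exact div_nonneg (Finset.sum_nonneg fun i _ => hterm i) (Nat.cast_nonneg N)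
        · refine ⟨1, ?_⟩
          rw [Filter.eventually_map]
          filter_upwards [Filter.eventually_ge_atTop 1] with N hN
          have hsum : (∑ i ∈ Finset.range N, (exampleGame.cost (p i) (p (i + 1)) : ℝ)) ≤ N := by
            calc (∑ i ∈ Finset.range N, (exampleGame.cost (p i) (p (i + 1)) : ℝ))
                ≤ ∑ _i ∈ Finset.range N, (1 : ℝ) :=
                  Finset.sum_le_sum (fun i _ => by exact_mod_cast cost_le_one _ _)
              _ = N := by simp
          have hN' : (0 : ℝ) < N := by exact_mod_cast Nat.lt_of_lt_of_le Nat.zero_lt_one hN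
          rw [div_le_one hN']
          exact hsum
      linarith
    · -- σ moves to r : the play alternates m, r and never sees priority 1
      set p : ℕ → Fin 3 := fun i => if i % 2 = 0 then 1 else 2 with hpdef
      have hpe : ∀ i, i % 2 = 0 → p i = 1 := fun i hi => by simp [hpdef, hi]
      have hpo : ∀ i, i % 2 ≠ 0 → p i = 2 := fun i hi => by simp [hpdef, hi]
      have hplay : exampleGame.Play p := by
        intro i
        by_cases hi : i % 2 = 0
        · rw [hpe i hi, hpo (i + 1) (by omega)]; exact edge12
        · rw [hpo i hi, hpe (i + 1) (by omega)]; exact edge21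
      have hcons : exampleGame.ConsistentConPos σ p := by
        intro i hdi
        have hp1 : p i = 1 := not_not.mp hdi
        have hi : i % 2 = 0 := by
          by_contra hi
          rw [hpo i hi] at hp1
          exact absurd hp1 (by decide)
        rw [hp1, h, hpo (i + 1) (by omega)]
      obtain ⟨⟨k, hodd, hio, -⟩, -⟩ := hwin p hplay (hpe 0 rfl) hcons
      obtain ⟨i, -, hi⟩ := hio 0
      have hz : exampleGame.pri (p i) = 0 := by
        by_cases h2 : i % 2 = 0
        · rw [hpe i h2]; decide
        · rw [hpo i h2]; decide
      rw [hz] at hi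
      have := Nat.odd_iff.mp hodd
      omega
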